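/- Let k be a commutative ring, λ ∈ k, and let M be the free k-module with basis {u_n : n ≥ 0} equipped with: the product ⋄ determined by u_m ⋄ u_n = Σ_{r=0}^{min(m,n)} C(m+n−r, m)·C(m, r)·(−λ²)^r·u_{m+n−2r}, and the coproduct Δ : M → M ⊗ M with Δ(u_0) = u_0 ⊗ u_0 and Δ(u_n) = Σ_{r=0}^{n} u_r ⊗ u_{n−r} + λ·Σ_{r=0}^{n−1} u_r ⊗ u_{n−1−r} for n ≥ 1. Equip M ⊗ M with the componentwise product (x ⊗ y)·(x' ⊗ y') = (x ⋄ x') ⊗ (y ⋄ y'). Then Δ is multiplicative: Δ(a ⋄ b) = Δ(a)·Δ(b) for all a, b ∈ M. -/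

import Mathlib

open TensorProduct

/-- The basis vectors `u n = single n 1` of the free `k`-module `ℕ →₀ k`. -/
noncomputable def uvec {k : Type*} [CommRing k] (n : ℕ) : ℕ →₀ k := Finsupp.single n 1

section AuxLemmas
open Finset

open Finset

lemma choose_mul' (N m r : ℕ) (hr : r ≤ m) :
    N.choose m * m.choose r = N.choose r * (N - r).choose (m - r) := by
  rcases le_or_gt m N with h | h
  · exact Nat.choose_mul hr
  · rw [Nat.choose_eq_zero_of_lt h, Nat.zero_mul]
    rcases le_or_gt r N with h2 | h2
    · rw [Nat.choose_eq_zero_of_lt (show N - r < m - r by omega), Nat.mul_zero]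
    · rw [Nat.choose_eq_zero_of_lt h2, Nat.zero_mul]

lemma sum_choose_add (A B r : ℕ) :
    ∑ s ∈ range (r + 1), (A + s).choose s * (B + (r - s)).choose (r - s)
      = (A + B + r + 1).choose r := by
  induction r generalizing B with
  | zero => simp
  | succ r ih =>
    induction B with
    | zero =>
      rw [Finset.sum_range_succ]
      have h1 : ∀ s ∈ range (r + 1),
          (A + s).choose s * (0 + (r + 1 - s)).choose (r + 1 - s)
            = (A + s).choose s * (0 + (r - s)).choose (r - s) := by
        intro s _; simp
      rw [Finset.sum_congr rfl h1, ih 0,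
        show A + 0 + (r + 1) + 1 = (A + 0 + r + 1) + 1 by omega,
        Nat.choose_succ_succ' (A + 0 + r + 1) r]
      have e : r + 1 - (r + 1) = 0 := by omega
      rw [e]
      simp
      rw [show A + (r + 1) = A + r + 1 by omega]
    | succ B ihB =>
      rw [Finset.sum_range_succ]
      have key : ∀ s ∈ range (r + 1),
          (A + s).choose s * (B + 1 + (r + 1 - s)).choose (r + 1 - s)
            = (A + s).choose s * (B + 1 + (r - s)).choose (r - s)
              + (A + s).choose s * (B + (r + 1 - s)).choose (r + 1 - s) := by
        intro s hs
        rw [mem_range] at hs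
        have e1 : r + 1 - s = (r - s) + 1 := by omega
        have e2 : B + 1 + (r + 1 - s) = (B + (r - s + 1)) + 1 := by omega
        rw [e2, e1, Nat.choose_succ_succ' (B + (r - s + 1)) (r - s)]
        have e3 : B + (r - s + 1) = B + 1 + (r - s) := by omega
        rw [Nat.mul_add, e3]
      have hrest : (∑ s ∈ range (r + 1),
            (A + s).choose s * (B + (r + 1 - s)).choose (r + 1 - s))
          + (A + (r + 1)).choose (r + 1)
              * (B + 1 + (r + 1 - (r + 1))).choose (r + 1 - (r + 1))
          = (A + B + (r + 1) + 1).choose (r + 1) := by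
        rw [← ihB, Finset.sum_range_succ
          (fun s => (A + s).choose s * (B + (r + 1 - s)).choose (r + 1 - s)) (r + 1)]
        simp
      rw [Finset.sum_congr rfl key, Finset.sum_add_distrib, ih (B + 1), add_assoc]
      rw [hrest]
      rw [show A + (B + 1) + (r + 1) + 1 = (A + (B + 1) + r + 1) + 1 by omega,
        Nat.choose_succ_succ' (A + (B + 1) + r + 1) r]
      congr 2
      omega



open Finset

section
variable {k : Type*} [CommRing k] (lam : k)


/-- coefficient of `u_c` in `u_x ⋄ u_y`. -/
noncomputable def Pval (x y c : ℕ) : k :=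
  ∑ s ∈ range (min x y + 1),
    (((x + y - s).choose x * x.choose s : ℕ) : k) * (-lam ^ 2) ^ s
      * (if x + y - 2 * s = c then 1 else 0)

lemma Pval_eq (x y c Z : ℕ) (hZ : min x y < Z) :
    Pval lam x y c = ∑ s ∈ range Z,
      (((x + y - s).choose x * x.choose s : ℕ) : k) * (-lam ^ 2) ^ s
        * (if x + y = c + 2 * s then 1 else 0) := by
  rw [Pval]
  have h1 : ∀ s ∈ range (min x y + 1),
      (((x + y - s).choose x * x.choose s : ℕ) : k) * (-lam ^ 2) ^ s
          * (if x + y - 2 * s = c then 1 else 0)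
        = (((x + y - s).choose x * x.choose s : ℕ) : k) * (-lam ^ 2) ^ s
          * (if x + y = c + 2 * s then 1 else 0) := by
    intro s hs
    rw [mem_range] at hs
    congr 1
    apply if_congr _ rfl rfl
    omega
  rw [Finset.sum_congr rfl h1]
  apply Finset.sum_subset (Finset.range_subset_range.mpr hZ)
  intro s _ hs
  rw [mem_range, not_lt] at hs
  rcases le_or_gt s x with h | h
  · have : x + y - s < x := by omega
    rw [Nat.choose_eq_zero_of_lt this]
    simp
  · rw [Nat.choose_eq_zero_of_lt h]
    simp

lemma delta_collapse (Z c : ℕ) (hc : c < Z) (f : ℕ → k) :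
    ∑ γ ∈ range Z, f γ * (if γ = c then 1 else 0) = f c := by
  simp only [mul_ite, mul_one, mul_zero, Finset.sum_ite_eq' (range Z) c f,
    mem_range.mpr hc, if_true]

lemma delta_collapse' (Z c : ℕ) (hc : c < Z) (f : ℕ → k) :
    ∑ γ ∈ range Z, f γ * (if c = γ then 1 else 0) = f c := by
  simp only [mul_ite, mul_one, mul_zero, Finset.sum_ite_eq (range Z) c f,
    mem_range.mpr hc, if_true]

lemma vander_box (a b W Z : ℕ) (hZ : W < Z) :
    ∑ α ∈ range Z, ∑ γ ∈ range Z,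
        ((a.choose α * b.choose γ : ℕ) : k) * (if α + γ = W then 1 else 0)
      = ((a + b).choose W : ℕ) := by
  have h1 : ∀ α ∈ range Z, (∑ γ ∈ range Z,
      ((a.choose α * b.choose γ : ℕ) : k) * (if α + γ = W then 1 else 0))
        = if α ∈ range (W + 1) then ((a.choose α * b.choose (W - α) : ℕ) : k) else 0 := by
    intro α _
    rcases le_or_gt α W with h | h
    · rw [if_pos (mem_range.mpr (by omega))]
      have h2 : ∀ γ ∈ range Z,
          ((a.choose α * b.choose γ : ℕ) : k) * (if α + γ = W then 1 else 0)
            = (fun γ => ((a.choose α * b.choose γ : ℕ) : k)) γ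
              * (if γ = W - α then 1 else 0) := by
        intro γ _
        congr 1
        exact if_congr (by omega) rfl rfl
      rw [Finset.sum_congr rfl h2, delta_collapse _ _ (by omega)]
    · rw [if_neg (by simp; omega)]
      apply Finset.sum_eq_zero
      intro γ _
      rw [if_neg (by omega), mul_zero]
  rw [Finset.sum_congr rfl h1, Finset.sum_ite_mem,
    Finset.inter_eq_right.mpr (Finset.range_subset_range.mpr (by omega))]
  have := Nat.add_choose_eq a b W
  rw [Finset.Nat.sum_antidiagonal_eq_sum_range_succ_mk] at this
  rw [← Nat.cast_sum]
  exact_mod_cast congrArg (Nat.cast : ℕ → k) this.symm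

lemma conv_box (a b R Z : ℕ) (hZ : R < Z) :
    ∑ s ∈ range Z, ∑ t ∈ range Z,
        (((a + s).choose s * (b + t).choose t : ℕ) : k) * (-lam ^ 2) ^ (s + t)
          * (if s + t = R then 1 else 0)
      = (((a + b + R + 1).choose R : ℕ) : k) * (-lam ^ 2) ^ R := by
  have h1 : ∀ s ∈ range Z, (∑ t ∈ range Z,
      (((a + s).choose s * (b + t).choose t : ℕ) : k) * (-lam ^ 2) ^ (s + t)
        * (if s + t = R then 1 else 0))
        = if s ∈ range (R + 1) then
            (((a + s).choose s * (b + (R - s)).choose (R - s) : ℕ) : k) * (-lam ^ 2) ^ R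
          else 0 := by
    intro s _
    rcases le_or_gt s R with h | h
    · rw [if_pos (mem_range.mpr (by omega))]
      have h2 : ∀ t ∈ range Z,
          (((a + s).choose s * (b + t).choose t : ℕ) : k) * (-lam ^ 2) ^ (s + t)
            * (if s + t = R then 1 else 0)
            = (fun t => (((a + s).choose s * (b + t).choose t : ℕ) : k)
                * (-lam ^ 2) ^ (s + t)) t * (if t = R - s then 1 else 0) := by
        intro t _
        congr 1
        exact if_congr (by omega) rfl rfl
      rw [Finset.sum_congr rfl h2, delta_collapse _ _ (by omega)]
      rw [show s + (R - s) = R by omega]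
    · rw [if_neg (by simp; omega)]
      apply Finset.sum_eq_zero
      intro t _
      rw [if_neg (by omega), mul_zero]
  rw [Finset.sum_congr rfl h1, Finset.sum_ite_mem,
    Finset.inter_eq_right.mpr (Finset.range_subset_range.mpr (by omega)),
    ← Finset.sum_mul, ← Nat.cast_sum, sum_choose_add]

end
section
variable {k : Type*} [CommRing k] (lam : k)

lemma vander_box' (a b u X Z : ℕ) (hXZ : X ≤ Z) :
    ∑ α ∈ range Z, ∑ γ ∈ range Z,
        ((a.choose α * b.choose γ : ℕ) : k) * (if α + γ + u + 1 = X then 1 else 0)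
      = if u + 1 ≤ X then (((a + b).choose (X - 1 - u) : ℕ) : k) else 0 := by
  rcases le_or_gt (u + 1) X with h | h
  · rw [if_pos h]
    have h1 : ∀ α ∈ range Z, ∀ γ ∈ range Z,
        ((a.choose α * b.choose γ : ℕ) : k) * (if α + γ + u + 1 = X then 1 else 0)
          = ((a.choose α * b.choose γ : ℕ) : k) * (if α + γ = X - 1 - u then 1 else 0) := by
      intro α _ γ _
      congr 1
      exact if_congr (by omega) rfl rfl
    rw [Finset.sum_congr rfl fun α hα => Finset.sum_congr rfl (h1 α hα)]
    exact vander_box a b (X - 1 - u) Z (by omega)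
  · rw [if_neg (by omega)]
    apply Finset.sum_eq_zero; intro α _
    apply Finset.sum_eq_zero; intro γ _
    rw [if_neg (by omega), mul_zero]

lemma Gexp (a b u X : ℕ) :
    (if u + 1 ≤ X then (((a + b).choose (X - 1 - u) : ℕ) : k) else 0)
      = ∑ ρ ∈ range X, (((a + b).choose (X - 1 - ρ) : ℕ) : k) * (if u = ρ then 1 else 0) := by
  rcases le_or_gt (u + 1) X with h | h
  · rw [if_pos h]
    rw [delta_collapse' X u (by omega) (fun ρ => (((a + b).choose (X - 1 - ρ) : ℕ) : k))]
  · rw [if_neg (by omega)]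
    symm
    apply Finset.sum_eq_zero; intro ρ hρ
    rw [mem_range] at hρ
    rw [if_neg (by omega), mul_zero]

/-- Canonical quadruple sum equals the block RHS. -/
lemma canon_eq (a b X Y Z : ℕ) (hXZ : X ≤ Z) (hZ : X + Y ≤ Z + Z) :
    ∑ s ∈ range Z, ∑ t ∈ range Z, ∑ α ∈ range Z, ∑ γ ∈ range Z,
        (((a + s).choose s * (b + t).choose t : ℕ) : k) * (-lam ^ 2) ^ (s + t)
          * (if X + Y = a + b + 2 * (s + t) + 2 then 1 else 0)
          * (((a.choose α * b.choose γ : ℕ) : k) * (if α + γ + (s + t) + 1 = X then 1 else 0))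
      = ∑ ρ ∈ range X,
          (((a + b).choose (X - 1 - ρ) * ((a + b + ρ + 1).choose ρ) : ℕ) : k)
            * (-lam ^ 2) ^ ρ * (if X + Y = a + b + 2 * ρ + 2 then 1 else 0) := by
  have step1 : ∀ s ∈ range Z, ∀ t ∈ range Z,
      (∑ α ∈ range Z, ∑ γ ∈ range Z,
        (((a + s).choose s * (b + t).choose t : ℕ) : k) * (-lam ^ 2) ^ (s + t)
          * (if X + Y = a + b + 2 * (s + t) + 2 then 1 else 0)
          * (((a.choose α * b.choose γ : ℕ) : k) * (if α + γ + (s + t) + 1 = X then 1 else 0)))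
        = ∑ ρ ∈ range X,
            (((a + s).choose s * (b + t).choose t : ℕ) : k) * (-lam ^ 2) ^ (s + t)
              * (if X + Y = a + b + 2 * ρ + 2 then 1 else 0)
              * (((a + b).choose (X - 1 - ρ) : ℕ) : k) * (if s + t = ρ then 1 else 0) := by
    intro s _ t _
    rw [show (∑ α ∈ range Z, ∑ γ ∈ range Z,
        (((a + s).choose s * (b + t).choose t : ℕ) : k) * (-lam ^ 2) ^ (s + t)
          * (if X + Y = a + b + 2 * (s + t) + 2 then 1 else 0)
          * (((a.choose α * b.choose γ : ℕ) : k) * (if α + γ + (s + t) + 1 = X then 1 else 0)))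
        = (((a + s).choose s * (b + t).choose t : ℕ) : k) * (-lam ^ 2) ^ (s + t)
          * (if X + Y = a + b + 2 * (s + t) + 2 then 1 else 0)
          * ∑ α ∈ range Z, ∑ γ ∈ range Z,
              ((a.choose α * b.choose γ : ℕ) : k) * (if α + γ + (s + t) + 1 = X then 1 else 0) by
      rw [Finset.mul_sum]
      exact Finset.sum_congr rfl fun α _ => by rw [Finset.mul_sum]]
    rw [vander_box' a b (s + t) X Z hXZ, Gexp, Finset.mul_sum]
    apply Finset.sum_congr rfl
    intro ρ _
    by_cases h : s + t = ρ
    · subst h; ring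
    · rw [if_neg h]
      ring
  rw [Finset.sum_congr rfl fun s hs => Finset.sum_congr rfl (step1 s hs)]
  rw [Finset.sum_comm]
  rw [Finset.sum_congr rfl fun t _ => Finset.sum_comm]
  rw [Finset.sum_comm]
  -- now : ∑ ρ ∈ range X, ∑ t ∈ range Z, ∑ s ∈ range Z, ...
  apply Finset.sum_congr rfl
  intro ρ hρ
  rw [mem_range] at hρ
  have e : ∀ t ∈ range Z, ∀ s ∈ range Z,
      (((a + s).choose s * (b + t).choose t : ℕ) : k) * (-lam ^ 2) ^ (s + t)
          * (if X + Y = a + b + 2 * ρ + 2 then 1 else 0)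
          * (((a + b).choose (X - 1 - ρ) : ℕ) : k) * (if s + t = ρ then 1 else 0)
        = ((if X + Y = a + b + 2 * ρ + 2 then 1 else 0) * (((a + b).choose (X - 1 - ρ) : ℕ) : k))
          * ((((a + s).choose s * (b + t).choose t : ℕ) : k) * (-lam ^ 2) ^ (s + t)
              * (if s + t = ρ then 1 else 0)) := by
    intro t _ s _; ring
  rw [Finset.sum_congr rfl fun t ht => Finset.sum_congr rfl (e t ht)]
  rw [show (∑ t ∈ range Z, ∑ s ∈ range Z,
      ((if X + Y = a + b + 2 * ρ + 2 then 1 else 0) * (((a + b).choose (X - 1 - ρ) : ℕ) : k))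
        * ((((a + s).choose s * (b + t).choose t : ℕ) : k) * (-lam ^ 2) ^ (s + t)
            * (if s + t = ρ then 1 else 0)))
      = ((if X + Y = a + b + 2 * ρ + 2 then 1 else 0) * (((a + b).choose (X - 1 - ρ) : ℕ) : k))
        * ∑ s ∈ range Z, ∑ t ∈ range Z,
            (((a + s).choose s * (b + t).choose t : ℕ) : k) * (-lam ^ 2) ^ (s + t)
              * (if s + t = ρ then 1 else 0) by
    rw [Finset.mul_sum, Finset.sum_comm]
    exact Finset.sum_congr rfl fun t _ => by rw [Finset.mul_sum]]
  rw [conv_box lam a b ρ Z (by omega)]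
  push_cast
  ring
end
section
variable {k : Type*} [CommRing k] (lam : k)

lemma block_eq (a b X Y : ℕ) :
    ∑ i ∈ range X, ∑ p ∈ range Y, Pval lam i p a * Pval lam (X - 1 - i) (Y - 1 - p) b
      = ∑ ρ ∈ range X,
          (((a + b).choose (X - 1 - ρ) * (a + b + ρ + 1).choose ρ : ℕ) : k)
            * (-lam ^ 2) ^ ρ * (if X + Y = a + b + 2 * ρ + 2 then 1 else 0) := by
  set Z := X + Y with hZdef
  have hXZ : X ≤ Z := by omega
  set cS : (ℕ × ℕ) × ℕ × ℕ → Prop := fun z =>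
    z.1.1 + z.1.2 = a + 2 * z.2.1 ∧ (X - 1 - z.1.1) + (Y - 1 - z.1.2) = b + 2 * z.2.2
      ∧ z.2.1 ≤ z.1.1 ∧ z.2.1 ≤ z.1.2 ∧ z.2.2 ≤ X - 1 - z.1.1 ∧ z.2.2 ≤ Y - 1 - z.1.2
    with hcS
  set gS : (ℕ × ℕ) × ℕ × ℕ → k := fun z =>
    (if cS z then
      (((a + z.2.1).choose z.2.1 * (b + z.2.2).choose z.2.2 * (a.choose (z.1.1 - z.2.1)
          * b.choose (X - 1 - z.1.1 - z.2.2)) : ℕ) : k) * (-lam ^ 2) ^ (z.2.1 + z.2.2)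
     else 0) with hgS
  set cT : (ℕ × ℕ) × ℕ × ℕ → Prop := fun w =>
    w.2.1 ≤ a ∧ w.2.2 ≤ b ∧ w.2.1 + w.2.2 + (w.1.1 + w.1.2) + 1 = X
      ∧ X + Y = a + b + 2 * (w.1.1 + w.1.2) + 2
    with hcT
  set gT : (ℕ × ℕ) × ℕ × ℕ → k := fun w =>
    (if cT w then
      (((a + w.1.1).choose w.1.1 * (b + w.1.2).choose w.1.2 * (a.choose w.2.1
          * b.choose w.2.2) : ℕ) : k) * (-lam ^ 2) ^ (w.1.1 + w.1.2)
     else 0) with hgT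
  -- step 1 : expand the two `Pval`s
  have e1 : ∀ i ∈ range X, ∀ p ∈ range Y,
      Pval lam i p a * Pval lam (X - 1 - i) (Y - 1 - p) b
        = ∑ s ∈ range Z, ∑ t ∈ range Z, gS ((i, p), (s, t)) := by
    intro i hi p hp
    rw [mem_range] at hi hp
    rw [Pval_eq lam i p a Z (by omega), Pval_eq lam (X - 1 - i) (Y - 1 - p) b Z (by omega),
      Finset.sum_mul_sum]
    refine Finset.sum_congr rfl fun s _ => Finset.sum_congr rfl fun t _ => ?_
    rw [hgS]
    simp only [hcS]
    by_cases h1 : i + p = a + 2 * s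
    · by_cases h2 : (X - 1 - i) + (Y - 1 - p) = b + 2 * t
      · rw [if_pos h1, if_pos h2]
        by_cases h3 : s ≤ i ∧ s ≤ p ∧ t ≤ X - 1 - i ∧ t ≤ Y - 1 - p
        · obtain ⟨h3, h4, h5, h6⟩ := h3
          rw [if_pos ⟨h1, h2, h3, h4, h5, h6⟩]
          have c1 : (i + p - s).choose i * i.choose s = (a + s).choose s * a.choose (i - s) := by
            rw [show i + p - s = a + s by omega, choose_mul' (a + s) i s h3,
              show a + s - s = a by omega]
          have c2 : ((X - 1 - i) + (Y - 1 - p) - t).choose (X - 1 - i) * (X - 1 - i).choose t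
              = (b + t).choose t * b.choose (X - 1 - i - t) := by
            rw [show (X - 1 - i) + (Y - 1 - p) - t = b + t by omega,
              choose_mul' (b + t) (X - 1 - i) t h5, show b + t - t = b by omega]
          rw [c1, c2]
          push_cast
          ring
        · have hneg : ¬(i + p = a + 2 * s ∧ X - 1 - i + (Y - 1 - p) = b + 2 * t
              ∧ s ≤ i ∧ s ≤ p ∧ t ≤ X - 1 - i ∧ t ≤ Y - 1 - p) := by
            intro hc
            exact h3 ⟨hc.2.2.1, hc.2.2.2.1, hc.2.2.2.2.1, hc.2.2.2.2.2⟩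
          rw [if_neg hneg]
          have hz : ((i + p - s).choose i * i.choose s)
              * (((X - 1 - i) + (Y - 1 - p) - t).choose (X - 1 - i) * (X - 1 - i).choose t)
                = 0 := by
            rcases Nat.lt_or_ge i s with h | h
            · rw [Nat.choose_eq_zero_of_lt h]; ring
            rcases Nat.lt_or_ge p s with h' | h'
            · rw [Nat.choose_eq_zero_of_lt (show i + p - s < i by omega)]; ring
            rcases Nat.lt_or_ge (X - 1 - i) t with h'' | h''
            · rw [Nat.choose_eq_zero_of_lt h'']; ring
            rcases Nat.lt_or_ge (Y - 1 - p) t with h''' | h'''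
            · rw [Nat.choose_eq_zero_of_lt
                (show (X - 1 - i) + (Y - 1 - p) - t < X - 1 - i by omega)]; ring
            omega
          have hzk : (((i + p - s).choose i * i.choose s : ℕ) : k)
              * ((((X - 1 - i) + (Y - 1 - p) - t).choose (X - 1 - i)
                  * (X - 1 - i).choose t : ℕ) : k) = 0 := by
            rw [← Nat.cast_mul, hz, Nat.cast_zero]
          rw [mul_one, mul_one]
          linear_combination ((-lam ^ 2) ^ s * (-lam ^ 2) ^ t) * hzk
      · have hneg : ¬(i + p = a + 2 * s ∧ X - 1 - i + (Y - 1 - p) = b + 2 * t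
            ∧ s ≤ i ∧ s ≤ p ∧ t ≤ X - 1 - i ∧ t ≤ Y - 1 - p) := fun hc => h2 hc.2.1
        rw [if_neg h2, if_neg hneg]
        ring
    · have hneg : ¬(i + p = a + 2 * s ∧ X - 1 - i + (Y - 1 - p) = b + 2 * t
          ∧ s ≤ i ∧ s ≤ p ∧ t ≤ X - 1 - i ∧ t ≤ Y - 1 - p) := fun hc => h1 hc.1
      rw [if_neg h1, if_neg hneg]
      ring
  rw [Finset.sum_congr rfl fun i hi => Finset.sum_congr rfl fun p hp => e1 i hi p hp]
  -- step 2 : flatten, filter, reindex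
  have flatS : ∑ z ∈ ((range X ×ˢ range Y) ×ˢ (range Z ×ˢ range Z)), gS z
      = ∑ i ∈ range X, ∑ p ∈ range Y, ∑ s ∈ range Z, ∑ t ∈ range Z, gS ((i, p), (s, t)) := by
    rw [Finset.sum_product]
    rw [Finset.sum_product]
    exact Finset.sum_congr rfl fun x _ => Finset.sum_congr rfl fun p _ =>
      Finset.sum_product _ _ _
  have flatT : ∑ w ∈ ((range Z ×ˢ range Z) ×ˢ (range Z ×ˢ range Z)), gT w
      = ∑ s ∈ range Z, ∑ t ∈ range Z, ∑ α ∈ range Z, ∑ γ ∈ range Z, gT ((s, t), (α, γ)) := by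
    rw [Finset.sum_product]
    rw [Finset.sum_product]
    exact Finset.sum_congr rfl fun x _ => Finset.sum_congr rfl fun p _ =>
      Finset.sum_product _ _ _
  rw [← flatS]
  have hfilS : ∑ z ∈ ((range X ×ˢ range Y) ×ˢ (range Z ×ˢ range Z)), gS z
      = ∑ z ∈ ((range X ×ˢ range Y) ×ˢ (range Z ×ˢ range Z)).filter cS,
          (((a + z.2.1).choose z.2.1 * (b + z.2.2).choose z.2.2 * (a.choose (z.1.1 - z.2.1)
              * b.choose (X - 1 - z.1.1 - z.2.2)) : ℕ) : k) * (-lam ^ 2) ^ (z.2.1 + z.2.2) := by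
    rw [Finset.sum_filter]
  have hfilT : ∑ w ∈ ((range Z ×ˢ range Z) ×ˢ (range Z ×ˢ range Z)), gT w
      = ∑ w ∈ ((range Z ×ˢ range Z) ×ˢ (range Z ×ˢ range Z)).filter cT,
          (((a + w.1.1).choose w.1.1 * (b + w.1.2).choose w.1.2 * (a.choose w.2.1
              * b.choose w.2.2) : ℕ) : k) * (-lam ^ 2) ^ (w.1.1 + w.1.2) := by
    rw [Finset.sum_filter]
  have bij : ∑ z ∈ ((range X ×ˢ range Y) ×ˢ (range Z ×ˢ range Z)).filter cS,
        (((a + z.2.1).choose z.2.1 * (b + z.2.2).choose z.2.2 * (a.choose (z.1.1 - z.2.1)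
            * b.choose (X - 1 - z.1.1 - z.2.2)) : ℕ) : k) * (-lam ^ 2) ^ (z.2.1 + z.2.2)
      = ∑ w ∈ ((range Z ×ˢ range Z) ×ˢ (range Z ×ˢ range Z)).filter cT,
          (((a + w.1.1).choose w.1.1 * (b + w.1.2).choose w.1.2 * (a.choose w.2.1
              * b.choose w.2.2) : ℕ) : k) * (-lam ^ 2) ^ (w.1.1 + w.1.2) := by
    refine Finset.sum_nbij'
      (fun z => ((z.2.1, z.2.2), (z.1.1 - z.2.1, X - 1 - z.1.1 - z.2.2)))
      (fun w => ((w.2.1 + w.1.1, a - w.2.1 + w.1.1), (w.1.1, w.1.2)))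
      ?_ ?_ ?_ ?_ ?_
    · intro z hz
      simp only [Finset.mem_filter, Finset.mem_product, Finset.mem_range, hcS, hcT] at hz ⊢
      omega
    · intro w hw
      simp only [Finset.mem_filter, Finset.mem_product, Finset.mem_range, hcS, hcT] at hw ⊢
      omega
    · intro z hz
      simp only [Finset.mem_filter, Finset.mem_product, Finset.mem_range, hcS] at hz
      have e1 : z.1.1 - z.2.1 + z.2.1 = z.1.1 := by omega
      have e2 : a - (z.1.1 - z.2.1) + z.2.1 = z.1.2 := by omega
      exact Prod.ext (Prod.ext e1 e2) rfl
    · intro w hw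
      simp only [Finset.mem_filter, Finset.mem_product, Finset.mem_range, hcT] at hw
      have e1 : w.2.1 + w.1.1 - w.1.1 = w.2.1 := by omega
      have e2 : X - 1 - (w.2.1 + w.1.1) - w.1.2 = w.2.2 := by omega
      exact Prod.ext rfl (Prod.ext e1 e2)
    · intro z hz
      rfl
  rw [hfilS, bij, ← hfilT, flatT]
  -- step 3 : identify with the canonical sum and conclude
  have canon : ∀ s ∈ range Z, ∀ t ∈ range Z, ∀ α ∈ range Z, ∀ γ ∈ range Z,
      gT ((s, t), (α, γ))
        = (((a + s).choose s * (b + t).choose t : ℕ) : k) * (-lam ^ 2) ^ (s + t)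
            * (if X + Y = a + b + 2 * (s + t) + 2 then 1 else 0)
            * (((a.choose α * b.choose γ : ℕ) : k)
                * (if α + γ + (s + t) + 1 = X then 1 else 0)) := by
    intro s _ t _ α _ γ _
    rw [hgT]
    simp only [hcT]
    by_cases h1 : X + Y = a + b + 2 * (s + t) + 2
    · by_cases h2 : α + γ + (s + t) + 1 = X
      · by_cases h3 : α ≤ a
        · by_cases h4 : γ ≤ b
          · rw [if_pos ⟨h3, h4, h2, h1⟩, if_pos h1, if_pos h2]
            push_cast
            ring
          · have hneg : ¬(α ≤ a ∧ γ ≤ b ∧ α + γ + (s + t) + 1 = X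
                ∧ X + Y = a + b + 2 * (s + t) + 2) := fun hc => h4 hc.2.1
            rw [if_neg hneg, if_pos h1, if_pos h2,
              Nat.choose_eq_zero_of_lt (show b < γ by omega)]
            push_cast
            ring
        · have hneg : ¬(α ≤ a ∧ γ ≤ b ∧ α + γ + (s + t) + 1 = X
              ∧ X + Y = a + b + 2 * (s + t) + 2) := fun hc => h3 hc.1
          rw [if_neg hneg, if_pos h1, if_pos h2,
            Nat.choose_eq_zero_of_lt (show a < α by omega)]
          push_cast
          ring
      · have hneg : ¬(α ≤ a ∧ γ ≤ b ∧ α + γ + (s + t) + 1 = X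
            ∧ X + Y = a + b + 2 * (s + t) + 2) := fun hc => h2 hc.2.2.1
        rw [if_neg hneg, if_neg h2]
        ring
    · have hneg : ¬(α ≤ a ∧ γ ≤ b ∧ α + γ + (s + t) + 1 = X
          ∧ X + Y = a + b + 2 * (s + t) + 2) := fun hc => h1 hc.2.2.2
      rw [if_neg hneg, if_neg h1]
      ring
  rw [Finset.sum_congr rfl fun s hs => Finset.sum_congr rfl fun t ht =>
    Finset.sum_congr rfl fun α hα => Finset.sum_congr rfl fun γ hγ => canon s hs t ht α hα γ hγ]
  exact canon_eq lam a b X Y Z hXZ (by omega)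

end
section
variable {k : Type*} [CommRing k] (lam : k)

noncomputable def Bblk (a b X Y : ℕ) : k :=
  ∑ ρ ∈ range X,
    (((a + b).choose (X - 1 - ρ) * (a + b + ρ + 1).choose ρ : ℕ) : k)
      * (-lam ^ 2) ^ ρ * (if X + Y = a + b + 2 * ρ + 2 then 1 else 0)

lemma block_eq' (a b X Y : ℕ) :
    ∑ i ∈ range X, ∑ p ∈ range Y, Pval lam i p a * Pval lam (X - 1 - i) (Y - 1 - p) b
      = Bblk lam a b X Y := block_eq lam a b X Y

lemma even_part (m n a b : ℕ) :
    Bblk lam a b (m + 1) (n + 1) + lam * lam * Bblk lam a b m n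
      = ∑ r ∈ range (min m n + 1),
          (((m + n - r).choose m * m.choose r : ℕ) : k) * (-lam ^ 2) ^ r
            * (if m + n = a + b + 2 * r then 1 else 0) := by
  have hB1 : Bblk lam a b (m + 1) (n + 1)
      = ∑ ρ ∈ range (m + 1),
          (((a + b).choose (m - ρ) * (a + b + ρ + 1).choose ρ : ℕ) : k)
            * (-lam ^ 2) ^ ρ * (if m + n = a + b + 2 * ρ then 1 else 0) := by
    rw [Bblk]
    refine Finset.sum_congr rfl fun ρ _ => ?_
    rw [show m + 1 - 1 - ρ = m - ρ by omega]
    congr 1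
    exact if_congr (by omega) rfl rfl
  have key : ∀ ρ ∈ range m,
      (((a + b).choose (m - (ρ + 1)) * (a + b + (ρ + 1) + 1).choose (ρ + 1) : ℕ) : k)
          * (-lam ^ 2) ^ (ρ + 1) * (if m + n = a + b + 2 * (ρ + 1) then 1 else 0)
        + lam * lam * ((((a + b).choose (m - 1 - ρ) * (a + b + ρ + 1).choose ρ : ℕ) : k)
            * (-lam ^ 2) ^ ρ * (if m + n = a + b + 2 * ρ + 2 then 1 else 0))
        = (((a + b).choose (m - (ρ + 1)) * (a + b + (ρ + 1)).choose (ρ + 1) : ℕ) : k)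
            * (-lam ^ 2) ^ (ρ + 1) * (if m + n = a + b + 2 * (ρ + 1) then 1 else 0) := by
    intro ρ hρ
    rw [mem_range] at hρ
    have pas : ((a + b + ρ + 2).choose (ρ + 1) : k)
        = ((a + b + ρ + 1).choose ρ : k) + ((a + b + ρ + 1).choose (ρ + 1) : k) := by
      exact_mod_cast congrArg (Nat.cast (R := k)) (Nat.choose_succ_succ' (a + b + ρ + 1) ρ)
    rw [show m - 1 - ρ = m - (ρ + 1) by omega,
      show (if m + n = a + b + 2 * ρ + 2 then (1:k) else 0)
        = (if m + n = a + b + 2 * (ρ + 1) then (1:k) else 0) from if_congr (by omega) rfl rfl,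
      show a + b + (ρ + 1) + 1 = a + b + ρ + 2 by omega,
      show a + b + (ρ + 1) = a + b + ρ + 1 by omega]
    push_cast [pas]
    ring
  have step1 : Bblk lam a b (m + 1) (n + 1) + lam * lam * Bblk lam a b m n
      = ∑ ρ ∈ range (m + 1),
          (((a + b).choose (m - ρ) * (a + b + ρ).choose ρ : ℕ) : k)
            * (-lam ^ 2) ^ ρ * (if m + n = a + b + 2 * ρ then 1 else 0) := by
    rw [hB1, Bblk, Finset.sum_range_succ' (fun ρ =>
        (((a + b).choose (m - ρ) * (a + b + ρ + 1).choose ρ : ℕ) : k)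
          * (-lam ^ 2) ^ ρ * (if m + n = a + b + 2 * ρ then 1 else 0)) m,
      Finset.sum_range_succ' (fun ρ =>
        (((a + b).choose (m - ρ) * (a + b + ρ).choose ρ : ℕ) : k)
          * (-lam ^ 2) ^ ρ * (if m + n = a + b + 2 * ρ then 1 else 0)) m,
      Finset.mul_sum, add_right_comm, ← Finset.sum_add_distrib]
    congr 1
    · exact Finset.sum_congr rfl fun ρ hρ => key ρ hρ
    · push_cast [Nat.choose_zero_right]
      ring
  rw [step1]
  have congr1 : ∀ r ∈ range (min m n + 1),
      (((m + n - r).choose m * m.choose r : ℕ) : k) * (-lam ^ 2) ^ r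
          * (if m + n = a + b + 2 * r then 1 else 0)
        = (((a + b).choose (m - r) * (a + b + r).choose r : ℕ) : k)
            * (-lam ^ 2) ^ r * (if m + n = a + b + 2 * r then 1 else 0) := by
    intro r hr
    rw [mem_range] at hr
    by_cases hc : m + n = a + b + 2 * r
    · have : (m + n - r).choose m * m.choose r
          = (a + b).choose (m - r) * (a + b + r).choose r := by
        rw [show m + n - r = a + b + r by omega, choose_mul' (a + b + r) m r (by omega),
          show a + b + r - r = a + b by omega]
        ring
      rw [this]
    · rw [if_neg hc, mul_zero, mul_zero]
  rw [Finset.sum_congr rfl congr1]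
  symm
  apply Finset.sum_subset (Finset.range_subset_range.mpr (by omega))
  intro r hr hr'
  rw [mem_range] at hr
  rw [mem_range, not_lt] at hr'
  by_cases hc : m + n = a + b + 2 * r
  · rw [Nat.choose_eq_zero_of_lt (show a + b < m - r by omega)]
    simp
  · rw [if_neg hc, mul_zero]

lemma odd_part (m n a b : ℕ) :
    Bblk lam a b (m + 1) n + Bblk lam a b m (n + 1)
      = ∑ r ∈ range (min m n + 1),
          (((m + n - r).choose m * m.choose r : ℕ) : k) * (-lam ^ 2) ^ r
            * (if m + n = a + b + 2 * r + 1 then 1 else 0) := by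
  have hB1 : Bblk lam a b (m + 1) n
      = ∑ ρ ∈ range (m + 1),
          (((a + b).choose (m - ρ) * (a + b + ρ + 1).choose ρ : ℕ) : k)
            * (-lam ^ 2) ^ ρ * (if m + n = a + b + 2 * ρ + 1 then 1 else 0) := by
    rw [Bblk]
    refine Finset.sum_congr rfl fun ρ _ => ?_
    rw [show m + 1 - 1 - ρ = m - ρ by omega]
    congr 1
    exact if_congr (by omega) rfl rfl
  have hB2 : Bblk lam a b m (n + 1)
      = ∑ ρ ∈ range m,
          (((a + b).choose (m - 1 - ρ) * (a + b + ρ + 1).choose ρ : ℕ) : k)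
            * (-lam ^ 2) ^ ρ * (if m + n = a + b + 2 * ρ + 1 then 1 else 0) := by
    rw [Bblk]
    refine Finset.sum_congr rfl fun ρ _ => ?_
    congr 1
    exact if_congr (by omega) rfl rfl
  have step1 : Bblk lam a b (m + 1) n + Bblk lam a b m (n + 1)
      = ∑ ρ ∈ range (m + 1),
          (((a + b + 1).choose (m - ρ) * (a + b + ρ + 1).choose ρ : ℕ) : k)
            * (-lam ^ 2) ^ ρ * (if m + n = a + b + 2 * ρ + 1 then 1 else 0) := by
    rw [hB1, hB2, Finset.sum_range_succ (fun ρ =>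
        (((a + b).choose (m - ρ) * (a + b + ρ + 1).choose ρ : ℕ) : k)
          * (-lam ^ 2) ^ ρ * (if m + n = a + b + 2 * ρ + 1 then 1 else 0)) m,
      Finset.sum_range_succ (fun ρ =>
        (((a + b + 1).choose (m - ρ) * (a + b + ρ + 1).choose ρ : ℕ) : k)
          * (-lam ^ 2) ^ ρ * (if m + n = a + b + 2 * ρ + 1 then 1 else 0)) m,
      add_right_comm, ← Finset.sum_add_distrib]
    congr 1
    · refine Finset.sum_congr rfl fun ρ hρ => ?_
      rw [mem_range] at hρ
      have pas : ((a + b + 1).choose (m - ρ) : k)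
          = ((a + b).choose (m - 1 - ρ) : k) + ((a + b).choose (m - ρ) : k) := by
        rw [show m - ρ = (m - 1 - ρ) + 1 by omega]
        exact_mod_cast congrArg (Nat.cast (R := k))
          (Nat.choose_succ_succ' (a + b) (m - 1 - ρ))
      push_cast [pas]
      ring
    · rw [show m - m = 0 by omega]
      push_cast [Nat.choose_zero_right]
      ring
  rw [step1]
  have congr1 : ∀ r ∈ range (min m n + 1),
      (((m + n - r).choose m * m.choose r : ℕ) : k) * (-lam ^ 2) ^ r
          * (if m + n = a + b + 2 * r + 1 then 1 else 0)
        = (((a + b + 1).choose (m - r) * (a + b + r + 1).choose r : ℕ) : k)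
            * (-lam ^ 2) ^ r * (if m + n = a + b + 2 * r + 1 then 1 else 0) := by
    intro r hr
    rw [mem_range] at hr
    by_cases hc : m + n = a + b + 2 * r + 1
    · have : (m + n - r).choose m * m.choose r
          = (a + b + 1).choose (m - r) * (a + b + r + 1).choose r := by
        rw [show m + n - r = a + b + r + 1 by omega, choose_mul' (a + b + r + 1) m r (by omega),
          show a + b + r + 1 - r = a + b + 1 by omega]
        ring
      rw [this]
    · rw [if_neg hc, mul_zero, mul_zero]
  rw [Finset.sum_congr rfl congr1]
  symm
  apply Finset.sum_subset (Finset.range_subset_range.mpr (by omega))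
  intro r hr hr'
  rw [mem_range] at hr
  rw [mem_range, not_lt] at hr'
  by_cases hc : m + n = a + b + 2 * r + 1
  · rw [Nat.choose_eq_zero_of_lt (show a + b + 1 < m - r by omega)]
    simp
  · rw [if_neg hc, mul_zero]

/-- The central scalar identity. -/
lemma main_scalar (m n a b : ℕ) :
    ∑ r ∈ range (min m n + 1),
        (((m + n - r).choose m * m.choose r : ℕ) : k) * (-lam ^ 2) ^ r
          * ((if m + n = a + b + 2 * r then 1 else 0)
              + lam * (if m + n = a + b + 2 * r + 1 then 1 else 0))
      = (∑ i ∈ range (m + 1), ∑ p ∈ range (n + 1),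
            Pval lam i p a * Pval lam (m - i) (n - p) b)
        + lam * (∑ i ∈ range (m + 1), ∑ p ∈ range n,
            Pval lam i p a * Pval lam (m - i) (n - 1 - p) b)
        + lam * (∑ i ∈ range m, ∑ p ∈ range (n + 1),
            Pval lam i p a * Pval lam (m - 1 - i) (n - p) b)
        + lam * lam * (∑ i ∈ range m, ∑ p ∈ range n,
            Pval lam i p a * Pval lam (m - 1 - i) (n - 1 - p) b) := by
  have b1 : (∑ i ∈ range (m + 1), ∑ p ∈ range (n + 1),
      Pval lam i p a * Pval lam (m - i) (n - p) b) = Bblk lam a b (m + 1) (n + 1) := by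
    rw [← block_eq' lam a b (m + 1) (n + 1)]
    exact Finset.sum_congr rfl fun i _ => Finset.sum_congr rfl fun p _ => by
      rw [show m + 1 - 1 - i = m - i from by omega, show n + 1 - 1 - p = n - p from by omega]
  have b2 : (∑ i ∈ range (m + 1), ∑ p ∈ range n,
      Pval lam i p a * Pval lam (m - i) (n - 1 - p) b) = Bblk lam a b (m + 1) n := by
    rw [← block_eq' lam a b (m + 1) n]
    exact Finset.sum_congr rfl fun i _ => Finset.sum_congr rfl fun p _ => by
      rw [show m + 1 - 1 - i = m - i from by omega]
  have b3 : (∑ i ∈ range m, ∑ p ∈ range (n + 1),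
      Pval lam i p a * Pval lam (m - 1 - i) (n - p) b) = Bblk lam a b m (n + 1) := by
    rw [← block_eq' lam a b m (n + 1)]
    exact Finset.sum_congr rfl fun i _ => Finset.sum_congr rfl fun p _ => by
      rw [show n + 1 - 1 - p = n - p from by omega]
  have b4 : (∑ i ∈ range m, ∑ p ∈ range n,
      Pval lam i p a * Pval lam (m - 1 - i) (n - 1 - p) b) = Bblk lam a b m n :=
    block_eq' lam a b m n
  rw [b1, b2, b3, b4]
  have expand : ∀ r ∈ range (min m n + 1),
      (((m + n - r).choose m * m.choose r : ℕ) : k) * (-lam ^ 2) ^ r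
          * ((if m + n = a + b + 2 * r then 1 else 0)
              + lam * (if m + n = a + b + 2 * r + 1 then 1 else 0))
        = (((m + n - r).choose m * m.choose r : ℕ) : k) * (-lam ^ 2) ^ r
            * (if m + n = a + b + 2 * r then 1 else 0)
          + lam * ((((m + n - r).choose m * m.choose r : ℕ) : k) * (-lam ^ 2) ^ r
              * (if m + n = a + b + 2 * r + 1 then 1 else 0)) := by
    intro r _
    ring
  rw [Finset.sum_congr rfl expand, Finset.sum_add_distrib, ← Finset.mul_sum,
    ← even_part lam m n a b, ← odd_part lam m n a b]
  ring
end
section scalar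
variable {k : Type*} [CommRing k]

lemma hSsum (N A B : ℕ) :
    (∑ i ∈ Finset.range (N + 1),
        (if i = A then (1 : k) else 0) * (if N - i = B then 1 else 0))
      = if N = A + B then 1 else 0 := by
  have h1 : ∀ i ∈ Finset.range (N + 1),
      (if i = A then (1 : k) else 0) * (if N - i = B then 1 else 0)
        = if i = A then (if N - i = B then (1 : k) else 0) else 0 := by
    intro i _; rw [boole_mul]
  rw [Finset.sum_congr rfl h1, Finset.sum_ite_eq' (Finset.range (N + 1)) A
    (fun i => if N - i = B then (1 : k) else 0)]
  rcases le_or_gt A N with h | h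
  · rw [if_pos (Finset.mem_range.mpr (by omega))]
    exact if_congr (by omega) rfl rfl
  · rw [if_neg (by rw [Finset.mem_range]; omega), if_neg (by omega)]

lemma hFsum (N A B : ℕ) :
    (∑ i ∈ Finset.range N,
        (if i = A then (1 : k) else 0) * (if N - 1 - i = B then 1 else 0))
      = if N = A + B + 1 then 1 else 0 := by
  have h1 : ∀ i ∈ Finset.range N,
      (if i = A then (1 : k) else 0) * (if N - 1 - i = B then 1 else 0)
        = if i = A then (if N - 1 - i = B then (1 : k) else 0) else 0 := by
    intro i _; rw [boole_mul]
  rw [Finset.sum_congr rfl h1, Finset.sum_ite_eq' (Finset.range N) A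
    (fun i => if N - 1 - i = B then (1 : k) else 0)]
  rcases lt_or_ge A N with h | h
  · rw [if_pos (Finset.mem_range.mpr h)]
    exact if_congr (by omega) rfl rfl
  · rw [if_neg (by rw [Finset.mem_range]; omega), if_neg (by omega)]

end scalar
end AuxLemmas

/-- For the modified quasi-shuffle product `⋄` of weight `-λ²` determined by
`u_m ⋄ u_n = Σ_{r=0}^{min(m,n)} C(m+n-r, m) C(m, r) (-λ²)^r • u_{m+n-2r}`, and the
coproduct `Δ(u_0) = u_0 ⊗ u_0`,
`Δ(u_n) = Σ_{r=0}^{n} u_r ⊗ u_{n-r} + λ • Σ_{r=0}^{n-1} u_r ⊗ u_{n-1-r}` (`n ≥ 1`),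
`Δ` is multiplicative with respect to the componentwise product on `M ⊗ M`:
`Δ(a ⋄ b) = Δ(a) · Δ(b)`. -/
theorem stmt_17 {k : Type*} [CommRing k] (lam : k)
    (D : (ℕ →₀ k) →ₗ[k] (ℕ →₀ k) →ₗ[k] (ℕ →₀ k))
    (hD : ∀ m n : ℕ, D (uvec m) (uvec n) =
      ∑ r ∈ Finset.range (min m n + 1),
        ((((m + n - r).choose m * m.choose r : ℕ) : k) * (-lam ^ 2) ^ r) •
          (uvec (m + n - 2 * r) : ℕ →₀ k))
    (Δ : (ℕ →₀ k) →ₗ[k] (ℕ →₀ k) ⊗[k] (ℕ →₀ k))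
    (h0 : Δ (uvec 0) = uvec 0 ⊗ₜ[k] uvec 0)
    (hΔ : ∀ n : ℕ, Δ (uvec (n + 1)) =
      (∑ r ∈ Finset.range (n + 2), uvec r ⊗ₜ[k] (uvec (n + 1 - r) : ℕ →₀ k)) +
        lam • ∑ r ∈ Finset.range (n + 1), uvec r ⊗ₜ[k] (uvec (n - r) : ℕ →₀ k))
    (Dt : (ℕ →₀ k) ⊗[k] (ℕ →₀ k) →ₗ[k] (ℕ →₀ k) ⊗[k] (ℕ →₀ k) →ₗ[k]
      (ℕ →₀ k) ⊗[k] (ℕ →₀ k))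
    (hDt : ∀ x y x' y' : ℕ →₀ k,
      Dt (x ⊗ₜ[k] y) (x' ⊗ₜ[k] y') = (D x x') ⊗ₜ[k] (D y y')) :
    ∀ a b : ℕ →₀ k, Δ (D a b) = Dt (Δ a) (Δ b) := by
  classical
  have phi_add : ∀ x y : (ℕ →₀ k) ⊗[k] (ℕ →₀ k),
      finsuppTensorFinsupp' k ℕ ℕ (x + y)
        = finsuppTensorFinsupp' k ℕ ℕ x + finsuppTensorFinsupp' k ℕ ℕ y :=
    fun x y => (finsuppTensorFinsupp' k ℕ ℕ).map_add x y
  have phi_smul : ∀ (c : k) (x : (ℕ →₀ k) ⊗[k] (ℕ →₀ k)),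
      finsuppTensorFinsupp' k ℕ ℕ (c • x) = c • finsuppTensorFinsupp' k ℕ ℕ x :=
    fun c x => (finsuppTensorFinsupp' k ℕ ℕ).map_smul c x
  have phi_sum : ∀ (s : Finset ℕ) (f : ℕ → (ℕ →₀ k) ⊗[k] (ℕ →₀ k)),
      finsuppTensorFinsupp' k ℕ ℕ (∑ i ∈ s, f i) = ∑ i ∈ s, finsuppTensorFinsupp' k ℕ ℕ (f i) :=
    fun s f => map_sum ((finsuppTensorFinsupp' k ℕ ℕ).toLinearMap) f s
  have hΔ' : ∀ N : ℕ, Δ (uvec N) =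
      (∑ i ∈ Finset.range (N + 1), uvec i ⊗ₜ[k] (uvec (N - i) : ℕ →₀ k))
        + lam • ∑ i ∈ Finset.range N, uvec i ⊗ₜ[k] (uvec (N - 1 - i) : ℕ →₀ k) := by
    intro N
    cases N with
    | zero => simpa using h0
    | succ n => exact hΔ n
  have hPv : ∀ x y c : ℕ, (D (uvec x) (uvec y)) c = Pval lam x y c := by
    intro x y c
    rw [hD, Pval, Finsupp.finset_sum_apply]
    refine Finset.sum_congr rfl fun s _ => ?_
    rw [Finsupp.smul_apply, uvec, Finsupp.single_apply, smul_eq_mul]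
  have hΔev : ∀ (N A B : ℕ),
      (finsuppTensorFinsupp' k ℕ ℕ) (Δ (uvec N)) (A, B)
        = (if N = A + B then (1 : k) else 0) + lam * (if N = A + B + 1 then 1 else 0) := by
    intro N A B
    rw [hΔ' N]
    simp only [phi_add, phi_smul, phi_sum, Finsupp.add_apply, Finsupp.smul_apply,
      Finsupp.finset_sum_apply, finsuppTensorFinsupp'_apply_apply, uvec,
      Finsupp.single_apply, smul_eq_mul]
    rw [hSsum, hFsum]
  have core : ∀ m n : ℕ, Δ (D (uvec m) (uvec n)) = Dt (Δ (uvec m)) (Δ (uvec n)) := by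
    intro m n
    apply (finsuppTensorFinsupp' k ℕ ℕ).injective
    ext ⟨a, b⟩
    have hR : (finsuppTensorFinsupp' k ℕ ℕ) (Dt (Δ (uvec m)) (Δ (uvec n))) (a, b)
        = (∑ i ∈ Finset.range (m + 1), ∑ p ∈ Finset.range (n + 1),
              Pval lam i p a * Pval lam (m - i) (n - p) b)
          + lam * (∑ i ∈ Finset.range (m + 1), ∑ p ∈ Finset.range n,
              Pval lam i p a * Pval lam (m - i) (n - 1 - p) b)
          + lam * (∑ i ∈ Finset.range m, ∑ p ∈ Finset.range (n + 1),
              Pval lam i p a * Pval lam (m - 1 - i) (n - p) b)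
          + lam * lam * (∑ i ∈ Finset.range m, ∑ p ∈ Finset.range n,
              Pval lam i p a * Pval lam (m - 1 - i) (n - 1 - p) b) := by
      have kgen : ∀ (I J : Finset ℕ) (f g f' g' : ℕ → ℕ),
          (finsuppTensorFinsupp' k ℕ ℕ)
              (Dt (∑ i ∈ I, uvec (f i) ⊗ₜ[k] uvec (g i))
                (∑ p ∈ J, uvec (f' p) ⊗ₜ[k] uvec (g' p))) (a, b)
            = ∑ i ∈ I, ∑ p ∈ J, Pval lam (f i) (f' p) a * Pval lam (g i) (g' p) b := by
        intro I J f g f' g'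
        rw [map_sum Dt _ I, LinearMap.sum_apply, phi_sum, Finsupp.finset_sum_apply]
        refine Finset.sum_congr rfl fun i _ => ?_
        rw [map_sum (Dt (uvec (f i) ⊗ₜ[k] uvec (g i))) _ J, phi_sum, Finsupp.finset_sum_apply]
        refine Finset.sum_congr rfl fun p _ => ?_
        rw [hDt]
        show (finsuppTensorFinsupp' k ℕ ℕ) _ (_, _) = _
        rw [finsuppTensorFinsupp'_apply_apply, hPv, hPv]
      have k1 := kgen (Finset.range (m+1)) (Finset.range (n+1))
        (fun i => i) (fun i => m - i) (fun p => p) (fun p => n - p)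
      have k2 := kgen (Finset.range (m+1)) (Finset.range n)
        (fun i => i) (fun i => m - i) (fun p => p) (fun p => n - 1 - p)
      have k3 := kgen (Finset.range m) (Finset.range (n+1))
        (fun i => i) (fun i => m - 1 - i) (fun p => p) (fun p => n - p)
      have k4 := kgen (Finset.range m) (Finset.range n)
        (fun i => i) (fun i => m - 1 - i) (fun p => p) (fun p => n - 1 - p)
      rw [hΔ' m, hΔ' n]
      simp only [map_add, map_smul, LinearMap.add_apply, LinearMap.smul_apply,
        phi_add, phi_smul, Finsupp.add_apply, Finsupp.smul_apply, smul_eq_mul]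
      rw [k1, k2, k3, k4]
      ring
    rw [hR, hD m n]
    simp only [map_sum, map_smul, phi_sum, phi_smul, Finsupp.finset_sum_apply,
      Finsupp.smul_apply, smul_eq_mul, hΔev]
    rw [← main_scalar lam m n a b]
    refine Finset.sum_congr rfl fun r hr => ?_
    rw [Finset.mem_range] at hr
    have e1 : (if m + n - 2 * r = a + b then (1 : k) else 0)
        = if m + n = a + b + 2 * r then 1 else 0 := if_congr (by omega) rfl rfl
    have e2 : (if m + n - 2 * r = a + b + 1 then (1 : k) else 0)
        = if m + n = a + b + 2 * r + 1 then 1 else 0 := if_congr (by omega) rfl rfl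
    rw [e1, e2]
  intro x y
  induction x using Finsupp.induction_linear with
  | zero => simp
  | add f g hf hg => simp only [map_add, LinearMap.add_apply, hf, hg]
  | single nm c =>
    induction y using Finsupp.induction_linear with
    | zero => simp
    | add f g hf hg => simp only [map_add, LinearMap.add_apply, hf, hg]
    | single nn d =>
      have hs : ∀ (q : ℕ) (e : k), Finsupp.single q e = e • uvec q := by
        intro q e
        rw [uvec, Finsupp.smul_single', mul_one]
      rw [hs nm c, hs nn d]
      simp only [map_smul, LinearMap.smul_apply, map_smul]
      rw [core nm nn]
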